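/- If Γ' is obtained from a graph Γ by deleting an edge (keeping the same vertex set), and Γ has no isolated vertices, then SO(Γ') < SO(Γ). -/

import Mathlib

open SimpleGraph

noncomputable def somborIndex {V : Type*} [Fintype V] (G : SimpleGraph V) : ℝ :=
  letI := Classical.decEq V
  letI : DecidableRel G.Adj := Classical.decRel _
  ∑ e ∈ G.edgeFinset,
    Sym2.lift ⟨fun u v => Real.sqrt ((G.degree u : ℝ) ^ 2 + (G.degree v : ℝ) ^ 2),
      fun u v => by dsimp only; rw [add_comm]⟩ e

theorem sombor_deleteEdge_lt {V : Type*} [Fintype V] (G : SimpleGraph V) (u v : V)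
    (huv : G.Adj u v) (hiso : ∀ w : V, (G.neighborSet w).Nonempty) :
    somborIndex (G.deleteEdges {s(u, v)}) < somborIndex G := by
  classical
  unfold somborIndex
  set G' := G.deleteEdges {s(u, v)} with hG'
  letI : DecidableRel G'.Adj := Classical.decRel _
  have hle : G' ≤ G := by exact SimpleGraph.deleteEdges_le _
  have hdeg : ∀ w, G'.degree w ≤ G.degree w := by
    intro w
    apply Finset.card_le_card
    intro x hx
    rw [SimpleGraph.mem_neighborFinset] at *
    exact hle hx
  have hsub : G'.edgeFinset ⊆ G.edgeFinset := by
    intro e he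
    rw [SimpleGraph.mem_edgeFinset] at *
    exact SimpleGraph.edgeSet_mono hle he
  calc (∑ e ∈ G'.edgeFinset,
        Sym2.lift ⟨fun a b => Real.sqrt ((G'.degree a : ℝ) ^ 2 + (G'.degree b : ℝ) ^ 2),
          fun a b => by dsimp only; rw [add_comm]⟩ e)
      ≤ ∑ e ∈ G'.edgeFinset,
        Sym2.lift ⟨fun a b => Real.sqrt ((G.degree a : ℝ) ^ 2 + (G.degree b : ℝ) ^ 2),
          fun a b => by dsimp only; rw [add_comm]⟩ e := by
        apply Finset.sum_le_sum
        intro e he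
        induction e using Sym2.ind with
        | _ a b =>
          simp only [Sym2.lift_mk]
          apply Real.sqrt_le_sqrt
          gcongr <;> exact_mod_cast hdeg _
    _ < ∑ e ∈ G.edgeFinset,
        Sym2.lift ⟨fun a b => Real.sqrt ((G.degree a : ℝ) ^ 2 + (G.degree b : ℝ) ^ 2),
          fun a b => by dsimp only; rw [add_comm]⟩ e := by
        apply Finset.sum_lt_sum_of_subset hsub (i := s(u, v))
        · rw [SimpleGraph.mem_edgeFinset]; exact huv
        · rw [SimpleGraph.mem_edgeFinset, hG', SimpleGraph.edgeSet_deleteEdges]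
          simp
        · simp only [Sym2.lift_mk]
          apply Real.sqrt_pos.mpr
          have hdu : 0 < G.degree u := by
            rw [← SimpleGraph.card_neighborFinset_eq_degree, Finset.card_pos]
            obtain ⟨x, hx⟩ := hiso u
            exact ⟨x, by rwa [SimpleGraph.mem_neighborFinset]⟩
          positivity
        · intro e he _
          induction e using Sym2.ind with
          | _ a b =>
            simp only [Sym2.lift_mk]
            positivity
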